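/- Let f₁, f₂, f₃ ∈ L²(ℝ² × λ⁻¹ℤ) be such that supp fᵢ ⊆ {(τ,ξ,q) : |ξ| ~ Mᵢ, ⟨τ − ω(ξ,q)⟩ ≲ Kᵢ, q ∈ Iᵢ} where Iᵢ ⊆ λ⁻¹ℤ. Then |∫ (f₁ ⋆ f₂) · f₃| ≲ M_min^{1/2} K_min^{1/2} |I|_min^{1/2} ∏ᵢ ‖fᵢ‖_{L²}, where M_min, K_min, |I|_min are the minima of the Mᵢ, Kᵢ, and the measures of the Iᵢ. -/

import Mathlib

open MeasureTheory

/-- The dispersion relation `ω(ξ,q) = ξ³ + q²/ξ` of KP-I. -/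
noncomputable def kpOmega (ξ q : ℝ) : ℝ := ξ ^ 3 + q ^ 2 / ξ

/-- The measure on `ℝ² × λ⁻¹ℤ`, the lattice being modeled by `ℤ` (with `n ↦ n/λ`)
carrying the counting measure divided by `λ`. -/
noncomputable def kpMeasure (lam : ℝ) : Measure (ℝ × ℝ × ℤ) :=
  (volume : Measure ℝ).prod
    ((volume : Measure ℝ).prod ((ENNReal.ofReal lam)⁻¹ • (Measure.count : Measure ℤ)))

namespace KPaux

open ENNReal

variable {G : Type*} [MeasurableSpace G]

/-- Cauchy–Schwarz for `lintegral`. -/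
lemma cs_lint (μ : Measure G) {u v : G → ℝ≥0∞} (hu : Measurable u) (hv : Measurable v) :
    ∫⁻ x, u x * v x ∂μ
      ≤ (∫⁻ x, u x ^ (2:ℝ) ∂μ) ^ (1/2:ℝ) * (∫⁻ x, v x ^ (2:ℝ) ∂μ) ^ (1/2:ℝ) := by
  have hpq : Real.HolderConjugate 2 2 := Real.holderConjugate_iff.mpr ⟨one_lt_two, by norm_num⟩
  simpa using ENNReal.lintegral_mul_le_Lp_mul_Lq μ hpq hu.aemeasurable hv.aemeasurable

/-- `L¹`-norm bounded via support measure and `L²`-norm. -/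
lemma l1_supp (μ : Measure G) {u : G → ℝ≥0∞} (hu : Measurable u) {s : Set G}
    (hs : MeasurableSet s) (h : ∀ x, u x ≠ 0 → x ∈ s) :
    ∫⁻ x, u x ∂μ ≤ μ s ^ (1/2:ℝ) * (∫⁻ x, u x ^ (2:ℝ) ∂μ) ^ (1/2:ℝ) := by
  have h1 : ∀ x, u x = s.indicator (1 : G → ℝ≥0∞) x * u x := by
    intro x
    by_cases hx : x ∈ s
    · simp [Set.indicator_of_mem hx]
    · have hux : u x = 0 := not_not.mp (mt (h x) hx)
      simp [Set.indicator_of_notMem hx, hux]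
  have hind : Measurable (s.indicator (1 : G → ℝ≥0∞)) := measurable_const.indicator hs
  calc ∫⁻ x, u x ∂μ = ∫⁻ x, s.indicator (1 : G → ℝ≥0∞) x * u x ∂μ := lintegral_congr h1
    _ ≤ (∫⁻ x, s.indicator (1 : G → ℝ≥0∞) x ^ (2:ℝ) ∂μ) ^ (1/2:ℝ)
          * (∫⁻ x, u x ^ (2:ℝ) ∂μ) ^ (1/2:ℝ) := cs_lint μ hind hu
    _ = μ s ^ (1/2:ℝ) * (∫⁻ x, u x ^ (2:ℝ) ∂μ) ^ (1/2:ℝ) := by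
        have h2 : ∀ x, s.indicator (1 : G → ℝ≥0∞) x ^ (2:ℝ)
            = s.indicator (1 : G → ℝ≥0∞) x := by
          intro x
          by_cases hx : x ∈ s
          · simp [Set.indicator_of_mem hx]
          · simp [Set.indicator_of_notMem hx, ENNReal.zero_rpow_of_pos]
        rw [lintegral_congr h2, lintegral_indicator_one hs]

/-- The `L²`-type quantity. -/
noncomputable def n2 (μ : Measure G) (u : G → ℝ≥0∞) : ℝ≥0∞ :=
  (∫⁻ x, u x ^ (2:ℝ) ∂μ) ^ (1/2:ℝ)

section Slots

set_option linter.unusedSectionVars false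

variable [AddCommGroup G] [MeasurableAdd₂ G] [MeasurableSub₂ G]
variable (μ : Measure G) [SFinite μ]

lemma slotU
    (hL : ∀ g : G → ℝ≥0∞, Measurable g → ∀ a, ∫⁻ x, g (a + x) ∂μ = ∫⁻ x, g x ∂μ)
    {u v w : G → ℝ≥0∞} (hu : Measurable u) (hv : Measurable v) (hw : Measurable w) :
    ∫⁻ s, ∫⁻ t, u s * (v t * w (s + t)) ∂μ ∂μ ≤ (∫⁻ x, u x ∂μ) * (n2 μ v * n2 μ w) := by
  have hinner : ∀ s, ∫⁻ t, v t * w (s + t) ∂μ ≤ n2 μ v * n2 μ w := by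
    intro s
    have hw' : Measurable fun t => w (s + t) := hw.comp (measurable_const.add measurable_id)
    calc ∫⁻ t, v t * w (s + t) ∂μ
        ≤ (∫⁻ t, v t ^ (2:ℝ) ∂μ) ^ (1/2:ℝ) * (∫⁻ t, w (s+t) ^ (2:ℝ) ∂μ) ^ (1/2:ℝ) :=
          cs_lint μ hv hw'
      _ = n2 μ v * n2 μ w := by
          rw [hL (fun x => w x ^ (2:ℝ)) (hw.pow measurable_const) s]; rfl
  calc ∫⁻ s, ∫⁻ t, u s * (v t * w (s+t)) ∂μ ∂μ
      = ∫⁻ s, u s * ∫⁻ t, v t * w (s+t) ∂μ ∂μ := by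
        refine lintegral_congr fun s => lintegral_const_mul (u s) ?_
        exact hv.mul (hw.comp (measurable_const.add measurable_id))
    _ ≤ ∫⁻ s, u s * (n2 μ v * n2 μ w) ∂μ :=
        lintegral_mono fun s => mul_le_mul_right (hinner s) _
    _ = (∫⁻ x, u x ∂μ) * (n2 μ v * n2 μ w) := lintegral_mul_const _ hu

lemma slotV
    (hL : ∀ g : G → ℝ≥0∞, Measurable g → ∀ a, ∫⁻ x, g (a + x) ∂μ = ∫⁻ x, g x ∂μ)
    {u v w : G → ℝ≥0∞} (hu : Measurable u) (hv : Measurable v) (hw : Measurable w) :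
    ∫⁻ s, ∫⁻ t, u s * (v t * w (s + t)) ∂μ ∂μ ≤ (∫⁻ x, v x ∂μ) * (n2 μ u * n2 μ w) := by
  have hmeas : AEMeasurable (Function.uncurry fun s t => u s * (v t * w (s + t))) (μ.prod μ) := by
    refine Measurable.aemeasurable ?_
    exact (hu.comp measurable_fst).mul ((hv.comp measurable_snd).mul (hw.comp measurable_add))
  have hswap : ∫⁻ s, ∫⁻ t, u s * (v t * w (s + t)) ∂μ ∂μ
      = ∫⁻ t, ∫⁻ s, v t * (u s * w (t + s)) ∂μ ∂μ := by
    rw [lintegral_lintegral_swap hmeas]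
    refine lintegral_congr fun t => lintegral_congr fun s => ?_
    rw [add_comm s t]; ring
  rw [hswap]
  exact slotU μ hL hv hu hw

lemma slotW
    (hL : ∀ g : G → ℝ≥0∞, Measurable g → ∀ a, ∫⁻ x, g (a + x) ∂μ = ∫⁻ x, g x ∂μ)
    (hS : ∀ g : G → ℝ≥0∞, Measurable g → ∀ a, ∫⁻ x, g (a - x) ∂μ = ∫⁻ x, g x ∂μ)
    {u v w : G → ℝ≥0∞} (hu : Measurable u) (hv : Measurable v) (hw : Measurable w) :
    ∫⁻ s, ∫⁻ t, u s * (v t * w (s + t)) ∂μ ∂μ ≤ (∫⁻ x, w x ∂μ) * (n2 μ u * n2 μ v) := by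
  have h1 : ∀ s, ∫⁻ t, v t * w (s + t) ∂μ = ∫⁻ r, v (r - s) * w r ∂μ := by
    intro s
    have hg : Measurable fun r => v (r - s) * w r :=
      (hv.comp (measurable_id.sub measurable_const)).mul hw
    have h2 := hL (fun r => v (r - s) * w r) hg s
    rw [← h2]
    refine lintegral_congr fun t => ?_
    rw [add_sub_cancel_left]
  have hmeas2 : AEMeasurable (Function.uncurry fun s r => u s * (v (r - s) * w r)) (μ.prod μ) := by
    refine Measurable.aemeasurable ?_
    exact (hu.comp measurable_fst).mul
      ((hv.comp (measurable_snd.sub measurable_fst)).mul (hw.comp measurable_snd))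
  calc ∫⁻ s, ∫⁻ t, u s * (v t * w (s+t)) ∂μ ∂μ
      = ∫⁻ s, u s * ∫⁻ t, v t * w (s+t) ∂μ ∂μ := by
        refine lintegral_congr fun s => lintegral_const_mul (u s) ?_
        exact hv.mul (hw.comp (measurable_const.add measurable_id))
    _ = ∫⁻ s, u s * ∫⁻ r, v (r - s) * w r ∂μ ∂μ := by
        exact lintegral_congr fun s => by rw [h1 s]
    _ = ∫⁻ s, ∫⁻ r, u s * (v (r - s) * w r) ∂μ ∂μ := by
        refine lintegral_congr fun s => ?_
        exact (lintegral_const_mul (u s)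
          ((hv.comp (measurable_id.sub measurable_const)).mul hw)).symm
    _ = ∫⁻ r, ∫⁻ s, u s * (v (r - s) * w r) ∂μ ∂μ := lintegral_lintegral_swap hmeas2
    _ = ∫⁻ r, w r * ∫⁻ s, u s * v (r - s) ∂μ ∂μ := by
        refine lintegral_congr fun r => ?_
        have hv' : Measurable fun s => v (r - s) := hv.comp (measurable_const.sub measurable_id)
        have h3 := lintegral_const_mul (μ := μ) (w r) (f := fun s => u s * v (r - s)) (hu.mul hv')
        rw [← h3]
        exact lintegral_congr fun s => by ring
    _ ≤ ∫⁻ r, w r * (n2 μ u * n2 μ v) ∂μ := by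
        refine lintegral_mono fun r => mul_le_mul_right ?_ _
        have hv' : Measurable fun s => v (r - s) := hv.comp (measurable_const.sub measurable_id)
        calc ∫⁻ s, u s * v (r - s) ∂μ
            ≤ (∫⁻ s, u s ^ (2:ℝ) ∂μ) ^ (1/2:ℝ) * (∫⁻ s, v (r-s) ^ (2:ℝ) ∂μ) ^ (1/2:ℝ) :=
              cs_lint μ hu hv'
          _ = n2 μ u * n2 μ v := by
              rw [hS (fun x => v x ^ (2:ℝ)) (hv.pow measurable_const) r]; rfl
    _ = (∫⁻ x, w x ∂μ) * (n2 μ u * n2 μ v) := lintegral_mul_const _ hw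

/-- The 1D trilinear estimate with the minimum of the three support measures. -/
lemma tri_min
    (hL : ∀ g : G → ℝ≥0∞, Measurable g → ∀ a, ∫⁻ x, g (a + x) ∂μ = ∫⁻ x, g x ∂μ)
    (hS : ∀ g : G → ℝ≥0∞, Measurable g → ∀ a, ∫⁻ x, g (a - x) ∂μ = ∫⁻ x, g x ∂μ)
    {u v w : G → ℝ≥0∞} (hu : Measurable u) (hv : Measurable v) (hw : Measurable w)
    {su sv sw : Set G} (msu : MeasurableSet su) (msv : MeasurableSet sv)
    (msw : MeasurableSet sw)
    (hsu : ∀ x, u x ≠ 0 → x ∈ su) (hsv : ∀ x, v x ≠ 0 → x ∈ sv)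
    (hsw : ∀ x, w x ≠ 0 → x ∈ sw) :
    ∫⁻ s, ∫⁻ t, u s * (v t * w (s + t)) ∂μ ∂μ
      ≤ (min (μ su) (min (μ sv) (μ sw))) ^ (1/2:ℝ) * (n2 μ u * (n2 μ v * n2 μ w)) := by
  rcases le_total (μ su) (min (μ sv) (μ sw)) with h1 | h1
  · rw [min_eq_left h1]
    calc ∫⁻ s, ∫⁻ t, u s * (v t * w (s + t)) ∂μ ∂μ
        ≤ (∫⁻ x, u x ∂μ) * (n2 μ v * n2 μ w) := slotU μ hL hu hv hw
      _ ≤ (μ su ^ (1/2:ℝ) * n2 μ u) * (n2 μ v * n2 μ w) :=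
          mul_le_mul_left (l1_supp μ hu msu hsu) _
      _ = μ su ^ (1/2:ℝ) * (n2 μ u * (n2 μ v * n2 μ w)) := by ring
  · rcases le_total (μ sv) (μ sw) with h2 | h2
    · rw [min_eq_right h1, min_eq_left h2]
      calc ∫⁻ s, ∫⁻ t, u s * (v t * w (s + t)) ∂μ ∂μ
          ≤ (∫⁻ x, v x ∂μ) * (n2 μ u * n2 μ w) := slotV μ hL hu hv hw
        _ ≤ (μ sv ^ (1/2:ℝ) * n2 μ v) * (n2 μ u * n2 μ w) :=
            mul_le_mul_left (l1_supp μ hv msv hsv) _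
        _ = μ sv ^ (1/2:ℝ) * (n2 μ u * (n2 μ v * n2 μ w)) := by ring
    · rw [min_eq_right h1, min_eq_right h2]
      calc ∫⁻ s, ∫⁻ t, u s * (v t * w (s + t)) ∂μ ∂μ
          ≤ (∫⁻ x, w x ∂μ) * (n2 μ u * n2 μ v) := slotW μ hL hS hu hv hw
        _ ≤ (μ sw ^ (1/2:ℝ) * n2 μ w) * (n2 μ u * n2 μ v) :=
            mul_le_mul_left (l1_supp μ hw msw hsw) _
        _ = μ sw ^ (1/2:ℝ) * (n2 μ u * (n2 μ v * n2 μ w)) := by ring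

end Slots

section Peel

set_option linter.unusedSectionVars false

variable {A X : Type*} [MeasurableSpace A] [MeasurableSpace X]
variable [AddCommGroup A] [AddCommGroup X] [MeasurableAdd₂ A] [MeasurableAdd₂ X]

instance : MeasurableAdd₂ (A × X) := by
  constructor
  have e : (fun p : (A × X) × (A × X) => p.1 + p.2)
      = fun p => (p.1.1 + p.2.1, p.1.2 + p.2.2) := rfl
  rw [e]
  exact (measurable_fst.fst.add measurable_snd.fst).prodMk
    (measurable_fst.snd.add measurable_snd.snd)

instance instMeasSub2Prod {A X : Type*} [MeasurableSpace A] [MeasurableSpace X]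
    [SubtractionMonoid A] [SubtractionMonoid X] [MeasurableSub₂ A] [MeasurableSub₂ X] :
    MeasurableSub₂ (A × X) := by
  constructor
  have e : (fun p : (A × X) × (A × X) => p.1 - p.2)
      = fun p => (p.1.1 - p.2.1, p.1.2 - p.2.2) := rfl
  rw [e]
  exact (measurable_fst.fst.sub measurable_snd.fst).prodMk
    (measurable_fst.snd.sub measurable_snd.snd)

/-- Peeling off the first coordinate of a trilinear convolution-type integral. -/
lemma peel (μ0 : Measure A) [SFinite μ0] (ν : Measure X) [SFinite ν]
    {u v w : A × X → ℝ≥0∞} (hu : Measurable u) (hv : Measurable v) (hw : Measurable w)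
    {U V W : X → ℝ≥0∞} (hU : Measurable U) (hV : Measurable V) (hW : Measurable W)
    {c : ℝ≥0∞}
    (h : ∀ x y : X, ∫⁻ s, ∫⁻ t, u (s, x) * (v (t, y) * w (s + t, x + y)) ∂μ0 ∂μ0
          ≤ c * (U x * (V y * W (x + y)))) :
    ∫⁻ a, ∫⁻ b, u a * (v b * w (a + b)) ∂(μ0.prod ν) ∂(μ0.prod ν)
      ≤ c * ∫⁻ x, ∫⁻ y, U x * (V y * W (x + y)) ∂ν ∂ν := by
  set Q : A × A → X × X → ℝ≥0∞ :=
    fun st xy => u (st.1, xy.1) * (v (st.2, xy.2) * w (st.1 + st.2, xy.1 + xy.2)) with hQdef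
  have hQ : Measurable fun p : (A × A) × (X × X) => Q p.1 p.2 := by
    apply Measurable.mul
    · exact hu.comp (measurable_fst.fst.prodMk measurable_snd.fst)
    apply Measurable.mul
    · exact hv.comp (measurable_fst.snd.prodMk measurable_snd.snd)
    · exact hw.comp ((measurable_fst.fst.add measurable_fst.snd).prodMk
        (measurable_snd.fst.add measurable_snd.snd))
  have step1 : ∫⁻ a, ∫⁻ b, u a * (v b * w (a + b)) ∂(μ0.prod ν) ∂(μ0.prod ν)
      = ∫⁻ s, ∫⁻ x, ∫⁻ t, ∫⁻ y, Q (s, t) (x, y) ∂ν ∂μ0 ∂ν ∂μ0 := by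
    have e1 : ∀ a : A × X, ∫⁻ b, u a * (v b * w (a + b)) ∂(μ0.prod ν)
        = ∫⁻ t, ∫⁻ y, Q (a.1, t) (a.2, y) ∂ν ∂μ0 := by
      intro a
      have hma : Measurable fun b : A × X => u a * (v b * w (a + b)) :=
        measurable_const.mul (hv.mul (hw.comp (measurable_const.add measurable_id)))
      exact lintegral_prod _ hma.aemeasurable
    have hm1 : Measurable fun p : (A × X) × A => ∫⁻ y, Q (p.1.1, p.2) (p.1.2, y) ∂ν :=
      Measurable.lintegral_prod_right'
        (f := fun q : ((A × X) × A) × X => Q (q.1.1.1, q.1.2) (q.1.1.2, q.2))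
        (hQ.comp ((measurable_fst.fst.fst.prodMk measurable_fst.snd).prodMk
          (measurable_fst.fst.snd.prodMk measurable_snd)))
    have hm2 : Measurable fun a : A × X => ∫⁻ t, ∫⁻ y, Q (a.1, t) (a.2, y) ∂ν ∂μ0 :=
      Measurable.lintegral_prod_right'
        (f := fun p : (A × X) × A => ∫⁻ y, Q (p.1.1, p.2) (p.1.2, y) ∂ν) hm1
    calc ∫⁻ a, ∫⁻ b, u a * (v b * w (a + b)) ∂(μ0.prod ν) ∂(μ0.prod ν)
        = ∫⁻ a, ∫⁻ t, ∫⁻ y, Q (a.1, t) (a.2, y) ∂ν ∂μ0 ∂(μ0.prod ν) := lintegral_congr e1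
      _ = ∫⁻ s, ∫⁻ x, ∫⁻ t, ∫⁻ y, Q (s, t) (x, y) ∂ν ∂μ0 ∂ν ∂μ0 :=
          lintegral_prod _ hm2.aemeasurable
  have step2 : (∫⁻ s, ∫⁻ x, ∫⁻ t, ∫⁻ y, Q (s, t) (x, y) ∂ν ∂μ0 ∂ν ∂μ0)
      = ∫⁻ s, ∫⁻ t, ∫⁻ x, ∫⁻ y, Q (s, t) (x, y) ∂ν ∂ν ∂μ0 ∂μ0 := by
    refine lintegral_congr fun s => ?_
    have hm : Measurable fun p : X × A => ∫⁻ y, Q (s, p.2) (p.1, y) ∂ν :=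
      Measurable.lintegral_prod_right'
        (f := fun q : (X × A) × X => Q (s, q.1.2) (q.1.1, q.2))
        (hQ.comp ((measurable_const.prodMk measurable_fst.snd).prodMk
          (measurable_fst.fst.prodMk measurable_snd)))
    exact lintegral_lintegral_swap hm.aemeasurable
  have hm3 : Measurable fun p : (A × A) × X => ∫⁻ y, Q p.1 (p.2, y) ∂ν :=
    Measurable.lintegral_prod_right'
      (f := fun q : ((A × A) × X) × X => Q q.1.1 (q.1.2, q.2))
      (hQ.comp (measurable_fst.fst.prodMk (measurable_fst.snd.prodMk measurable_snd)))
  have hm4 : Measurable fun st : A × A => ∫⁻ x, ∫⁻ y, Q st (x, y) ∂ν ∂ν :=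
    Measurable.lintegral_prod_right'
      (f := fun p : (A × A) × X => ∫⁻ y, Q p.1 (p.2, y) ∂ν) hm3
  have step3 : (∫⁻ s, ∫⁻ t, ∫⁻ x, ∫⁻ y, Q (s, t) (x, y) ∂ν ∂ν ∂μ0 ∂μ0)
      = ∫⁻ st, ∫⁻ x, ∫⁻ y, Q st (x, y) ∂ν ∂ν ∂(μ0.prod μ0) :=
    (lintegral_prod _ hm4.aemeasurable).symm
  have step4 : (∫⁻ st, ∫⁻ x, ∫⁻ y, Q st (x, y) ∂ν ∂ν ∂(μ0.prod μ0))
      = ∫⁻ x, ∫⁻ st, ∫⁻ y, Q st (x, y) ∂ν ∂(μ0.prod μ0) ∂ν :=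
    lintegral_lintegral_swap hm3.aemeasurable
  have step5 : ∀ x : X, (∫⁻ st, ∫⁻ y, Q st (x, y) ∂ν ∂(μ0.prod μ0))
      = ∫⁻ y, ∫⁻ st, Q st (x, y) ∂(μ0.prod μ0) ∂ν := by
    intro x
    have hm : Measurable fun p : (A × A) × X => Q p.1 (x, p.2) :=
      hQ.comp (measurable_fst.prodMk (measurable_const.prodMk measurable_snd))
    exact lintegral_lintegral_swap hm.aemeasurable
  have step6 : ∀ x y : X, (∫⁻ st, Q st (x, y) ∂(μ0.prod μ0)) ≤ c * (U x * (V y * W (x + y))) := by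
    intro x y
    have hm : Measurable fun st : A × A => Q st (x, y) :=
      hQ.comp (measurable_id.prodMk measurable_const)
    rw [lintegral_prod _ hm.aemeasurable]
    exact h x y
  calc ∫⁻ a, ∫⁻ b, u a * (v b * w (a + b)) ∂(μ0.prod ν) ∂(μ0.prod ν)
      = ∫⁻ x, ∫⁻ y, ∫⁻ st, Q st (x, y) ∂(μ0.prod μ0) ∂ν ∂ν := by
        rw [step1, step2, step3, step4]
        exact lintegral_congr step5
    _ ≤ ∫⁻ x, ∫⁻ y, c * (U x * (V y * W (x + y))) ∂ν ∂ν :=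
        lintegral_mono fun x => lintegral_mono fun y => step6 x y
    _ = c * ∫⁻ x, ∫⁻ y, U x * (V y * W (x + y)) ∂ν ∂ν := by
        have hyx : ∀ x, Measurable fun y => U x * (V y * W (x + y)) := fun x =>
          measurable_const.mul (hV.mul (hW.comp (measurable_const.add measurable_id)))
        have e1 : ∀ x, ∫⁻ y, c * (U x * (V y * W (x + y))) ∂ν
            = c * ∫⁻ y, U x * (V y * W (x + y)) ∂ν := fun x => lintegral_const_mul c (hyx x)
        have hmo : Measurable fun x => ∫⁻ y, U x * (V y * W (x + y)) ∂ν := by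
          refine Measurable.lintegral_prod_right'
            (f := fun p : X × X => U p.1 * (V p.2 * W (p.1 + p.2))) ?_
          exact (hU.comp measurable_fst).mul ((hV.comp measurable_snd).mul
            (hW.comp measurable_add))
        rw [lintegral_congr e1]
        exact lintegral_const_mul c hmo

end Peel

section Invariance

/-- Left translation identity for Lebesgue measure. -/
lemma vol_addL (g : ℝ → ℝ≥0∞) (a : ℝ) : ∫⁻ x, g (a + x) = ∫⁻ x, g x :=
  lintegral_add_left_eq_self g a

lemma vol_addR (g : ℝ → ℝ≥0∞) (a : ℝ) : ∫⁻ x, g (x + a) = ∫⁻ x, g x := by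
  have e : (fun x => g (x + a)) = fun x => g (a + x) := funext fun x => by rw [add_comm]
  rw [e]; exact vol_addL g a

lemma vol_subL (g : ℝ → ℝ≥0∞) (hg : Measurable g) (a : ℝ) :
    ∫⁻ x, g (a - x) = ∫⁻ x, g x :=
  (Measure.measurePreserving_sub_left volume a).lintegral_comp hg

noncomputable def cnt (lam : ℝ) : Measure ℤ :=
  (ENNReal.ofReal lam)⁻¹ • (Measure.count : Measure ℤ)

instance : SFinite (Measure.count : Measure ℤ) := by
  unfold Measure.count
  infer_instance

instance (lam : ℝ) : SFinite (cnt lam) := by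
  unfold cnt
  infer_instance

instance : MeasurableAdd₂ ℤ := ⟨measurable_of_countable _⟩
instance : MeasurableSub₂ ℤ := ⟨measurable_of_countable _⟩

lemma cnt_addL (lam : ℝ) (g : ℤ → ℝ≥0∞) (a : ℤ) :
    ∫⁻ x, g (a + x) ∂cnt lam = ∫⁻ x, g x ∂cnt lam := by
  unfold cnt
  rw [lintegral_smul_measure, lintegral_smul_measure, lintegral_count, lintegral_count]
  congr 1
  simpa using (Equiv.addLeft a).tsum_eq g

lemma cnt_addR (lam : ℝ) (g : ℤ → ℝ≥0∞) (a : ℤ) :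
    ∫⁻ x, g (x + a) ∂cnt lam = ∫⁻ x, g x ∂cnt lam := by
  unfold cnt
  rw [lintegral_smul_measure, lintegral_smul_measure, lintegral_count, lintegral_count]
  congr 1
  simpa using (Equiv.addRight a).tsum_eq g

lemma cnt_subL (lam : ℝ) (g : ℤ → ℝ≥0∞) (a : ℤ) :
    ∫⁻ x, g (a - x) ∂cnt lam = ∫⁻ x, g x ∂cnt lam := by
  unfold cnt
  rw [lintegral_smul_measure, lintegral_smul_measure, lintegral_count, lintegral_count]
  congr 1
  simpa using (Equiv.subLeft a).tsum_eq g

/-- Right-translation invariance passes to products. -/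
lemma prod_addR {A X : Type*} [MeasurableSpace A] [MeasurableSpace X]
    [AddCommGroup A] [AddCommGroup X] [MeasurableAdd₂ A] [MeasurableAdd₂ X]
    (μ0 : Measure A) [SFinite μ0] (ν : Measure X) [SFinite ν]
    (h0 : ∀ g : A → ℝ≥0∞, Measurable g → ∀ a, ∫⁻ x, g (x + a) ∂μ0 = ∫⁻ x, g x ∂μ0)
    (hX : ∀ g : X → ℝ≥0∞, Measurable g → ∀ a, ∫⁻ x, g (x + a) ∂ν = ∫⁻ x, g x ∂ν)
    (F : A × X → ℝ≥0∞) (hF : Measurable F) (b : A × X) :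
    ∫⁻ p, F (p + b) ∂(μ0.prod ν) = ∫⁻ p, F p ∂(μ0.prod ν) := by
  have hFb : Measurable fun p : A × X => F (p + b) := by
    refine hF.comp ?_
    have e : (fun p : A × X => p + b) = fun p => (p.1 + b.1, p.2 + b.2) := rfl
    rw [e]
    exact (measurable_fst.add measurable_const).prodMk (measurable_snd.add measurable_const)
  rw [lintegral_prod _ hFb.aemeasurable, lintegral_prod _ hF.aemeasurable]
  have e1 : ∀ s : A, (∫⁻ n, F ((s, n) + b) ∂ν) = ∫⁻ n, F (s + b.1, n) ∂ν := by
    intro s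
    have e2 : (fun n : X => F ((s, n) + b)) = fun n => F (s + b.1, n + b.2) := rfl
    rw [e2]
    exact hX (fun n => F (s + b.1, n)) (hF.comp (measurable_const.prodMk measurable_id)) b.2
  rw [lintegral_congr e1]
  have hout : Measurable fun s : A => ∫⁻ n, F (s, n) ∂ν :=
    Measurable.lintegral_prod_right' hF
  exact h0 (fun s => ∫⁻ n, F (s, n) ∂ν) hout b.1

lemma min3_le_ofReal {a b c : ℝ≥0∞} {x y z : ℝ} (ha : a ≤ ENNReal.ofReal x)
    (hb : b ≤ ENNReal.ofReal y) (hc : c ≤ ENNReal.ofReal z) :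
    min a (min b c) ≤ ENNReal.ofReal (min x (min y z)) := by
  rcases le_total x (min y z) with h | h
  · rw [min_eq_left h]; exact le_trans (min_le_left _ _) ha
  · rw [min_eq_right h]
    rcases le_total y z with h2 | h2
    · rw [min_eq_left h2]
      exact le_trans (le_trans (min_le_right _ _) (min_le_left _ _)) hb
    · rw [min_eq_right h2]
      exact le_trans (le_trans (min_le_right _ _) (min_le_right _ _)) hc

end Invariance

end KPaux

open scoped ENNReal in
set_option maxHeartbeats 1000000 in
/-- Basic trilinear estimate. -/
theorem stmt_11 : ∃ C : ℝ, 0 < C ∧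
    ∀ (lam : ℝ), 1 ≤ lam →
    ∀ (M₁ M₂ M₃ K₁ K₂ K₃ L₁ L₂ L₃ : ℝ),
      0 < M₁ → 0 < M₂ → 0 < M₃ → 1 ≤ K₁ → 1 ≤ K₂ → 1 ≤ K₃ → 0 ≤ L₁ → 0 ≤ L₂ → 0 ≤ L₃ →
    ∀ (I₁ I₂ I₃ : Set ℤ),
      ((ENNReal.ofReal lam)⁻¹ • (Measure.count : Measure ℤ)) I₁ ≤ ENNReal.ofReal L₁ →
      ((ENNReal.ofReal lam)⁻¹ • (Measure.count : Measure ℤ)) I₂ ≤ ENNReal.ofReal L₂ →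
      ((ENNReal.ofReal lam)⁻¹ • (Measure.count : Measure ℤ)) I₃ ≤ ENNReal.ofReal L₃ →
    ∀ (f₁ f₂ f₃ : ℝ × ℝ × ℤ → ℝ),
      Measurable f₁ → Measurable f₂ → Measurable f₃ →
      Integrable (fun p => (f₁ p) ^ 2) (kpMeasure lam) →
      Integrable (fun p => (f₂ p) ^ 2) (kpMeasure lam) →
      Integrable (fun p => (f₃ p) ^ 2) (kpMeasure lam) →
      (∀ p : ℝ × ℝ × ℤ, f₁ p ≠ 0 → M₁ / 2 ≤ |p.2.1| ∧ |p.2.1| ≤ 2 * M₁ ∧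
        Real.sqrt (1 + (p.1 - kpOmega p.2.1 ((p.2.2 : ℝ) / lam)) ^ 2) ≤ K₁ ∧ p.2.2 ∈ I₁) →
      (∀ p : ℝ × ℝ × ℤ, f₂ p ≠ 0 → M₂ / 2 ≤ |p.2.1| ∧ |p.2.1| ≤ 2 * M₂ ∧
        Real.sqrt (1 + (p.1 - kpOmega p.2.1 ((p.2.2 : ℝ) / lam)) ^ 2) ≤ K₂ ∧ p.2.2 ∈ I₂) →
      (∀ p : ℝ × ℝ × ℤ, f₃ p ≠ 0 → M₃ / 2 ≤ |p.2.1| ∧ |p.2.1| ≤ 2 * M₃ ∧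
        Real.sqrt (1 + (p.1 - kpOmega p.2.1 ((p.2.2 : ℝ) / lam)) ^ 2) ≤ K₃ ∧ p.2.2 ∈ I₃) →
      |∫ p, (∫ p', f₁ (p - p') * f₂ p' ∂(kpMeasure lam)) * f₃ p ∂(kpMeasure lam)|
        ≤ C * Real.sqrt (min M₁ (min M₂ M₃)) * Real.sqrt (min K₁ (min K₂ K₃))
            * Real.sqrt (min L₁ (min L₂ L₃))
            * Real.sqrt (∫ p, (f₁ p) ^ 2 ∂(kpMeasure lam))
            * Real.sqrt (∫ p, (f₂ p) ^ 2 ∂(kpMeasure lam))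
            * Real.sqrt (∫ p, (f₃ p) ^ 2 ∂(kpMeasure lam)) := by
  refine ⟨3, by norm_num, ?_⟩
  intro lam hlam M₁ M₂ M₃ K₁ K₂ K₃ L₁ L₂ L₃ hM₁ hM₂ hM₃ hK₁ hK₂ hK₃ hL₁ hL₂ hL₃
    I₁ I₂ I₃ hI₁ hI₂ hI₃ f₁ f₂ f₃ hm₁ hm₂ hm₃ hint₁ hint₂ hint₃ hs₁ hs₂ hs₃
  have hκ : kpMeasure lam = (volume : Measure ℝ).prod
      ((volume : Measure ℝ).prod (KPaux.cnt lam)) := rfl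
  haveI : SFinite (kpMeasure lam) := by rw [hκ]; infer_instance
  -- nonnegative lifts
  set g₁ : ℝ × ℝ × ℤ → ℝ≥0∞ := fun p => (‖f₁ p‖₊ : ℝ≥0∞) with hg₁def
  set g₂ : ℝ × ℝ × ℤ → ℝ≥0∞ := fun p => (‖f₂ p‖₊ : ℝ≥0∞) with hg₂def
  set g₃ : ℝ × ℝ × ℤ → ℝ≥0∞ := fun p => (‖f₃ p‖₊ : ℝ≥0∞) with hg₃def
  have hmg₁ : Measurable g₁ := measurable_coe_nnreal_ennreal.comp hm₁.nnnorm
  have hmg₂ : Measurable g₂ := measurable_coe_nnreal_ennreal.comp hm₂.nnnorm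
  have hmg₃ : Measurable g₃ := measurable_coe_nnreal_ennreal.comp hm₃.nnnorm
  -- partial L² quantities
  set φ₁ : ℝ × ℤ → ℝ≥0∞ := fun x => (∫⁻ s, g₁ (s, x) ^ (2:ℝ)) ^ (1/2:ℝ) with hφ₁def
  set φ₂ : ℝ × ℤ → ℝ≥0∞ := fun x => (∫⁻ s, g₂ (s, x) ^ (2:ℝ)) ^ (1/2:ℝ) with hφ₂def
  set φ₃ : ℝ × ℤ → ℝ≥0∞ := fun x => (∫⁻ s, g₃ (s, x) ^ (2:ℝ)) ^ (1/2:ℝ) with hφ₃def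
  have hmφ : ∀ (g : ℝ × ℝ × ℤ → ℝ≥0∞), Measurable g →
      Measurable fun x : ℝ × ℤ => (∫⁻ s, g (s, x) ^ (2:ℝ)) ^ (1/2:ℝ) := by
    intro g hg
    have h1 : Measurable fun x : ℝ × ℤ => ∫⁻ s, g (s, x) ^ (2:ℝ) :=
      Measurable.lintegral_prod_right' (f := fun q : (ℝ × ℤ) × ℝ => g (q.2, q.1) ^ (2:ℝ))
        ((hg.comp (measurable_snd.prodMk measurable_fst)).pow measurable_const)
    exact h1.pow measurable_const
  have hmφ₁ : Measurable φ₁ := hmφ g₁ hmg₁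
  have hmφ₂ : Measurable φ₂ := hmφ g₂ hmg₂
  have hmφ₃ : Measurable φ₃ := hmφ g₃ hmg₃
  set ψ₁ : ℤ → ℝ≥0∞ := fun n => (∫⁻ ξ, φ₁ (ξ, n) ^ (2:ℝ)) ^ (1/2:ℝ) with hψ₁def
  set ψ₂ : ℤ → ℝ≥0∞ := fun n => (∫⁻ ξ, φ₂ (ξ, n) ^ (2:ℝ)) ^ (1/2:ℝ) with hψ₂def
  set ψ₃ : ℤ → ℝ≥0∞ := fun n => (∫⁻ ξ, φ₃ (ξ, n) ^ (2:ℝ)) ^ (1/2:ℝ) with hψ₃def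
  have hmψ₁ : Measurable ψ₁ := measurable_of_countable _
  have hmψ₂ : Measurable ψ₂ := measurable_of_countable _
  have hmψ₃ : Measurable ψ₃ := measurable_of_countable _
  -- nonvanishing transfers
  have hne₁ : ∀ p, g₁ p ≠ 0 → f₁ p ≠ 0 := by
    intro p h hf; apply h; rw [hg₁def]; simp [hf]
  have hne₂ : ∀ p, g₂ p ≠ 0 → f₂ p ≠ 0 := by
    intro p h hf; apply h; rw [hg₂def]; simp [hf]
  have hne₃ : ∀ p, g₃ p ≠ 0 → f₃ p ≠ 0 := by
    intro p h hf; apply h; rw [hg₃def]; simp [hf]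
  have hzero : ∀ (g : ℝ × ℝ × ℤ → ℝ≥0∞) (f : ℝ × ℝ × ℤ → ℝ),
      (g = fun p => (‖f p‖₊ : ℝ≥0∞)) → ∀ x : ℝ × ℤ, (∀ s : ℝ, f (s, x) = 0) →
      ((∫⁻ s, g (s, x) ^ (2:ℝ)) ^ (1/2:ℝ) : ℝ≥0∞) = 0 := by
    intro g f hgf x h
    have e : ∀ s : ℝ, g (s, x) ^ (2:ℝ) = 0 := by
      intro s
      have : g (s, x) = 0 := by rw [hgf]; simp [h s]
      rw [this]; exact ENNReal.zero_rpow_of_pos (by norm_num)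
    rw [lintegral_congr e, lintegral_zero]
    exact ENNReal.zero_rpow_of_pos (by norm_num)
  -- invariance packages
  have hLv : ∀ g : ℝ → ℝ≥0∞, Measurable g → ∀ a, ∫⁻ x, g (a + x) = ∫⁻ x, g x :=
    fun g _ a => KPaux.vol_addL g a
  have hSv : ∀ g : ℝ → ℝ≥0∞, Measurable g → ∀ a, ∫⁻ x, g (a - x) = ∫⁻ x, g x :=
    fun g hg a => KPaux.vol_subL g hg a
  have hLc : ∀ g : ℤ → ℝ≥0∞, Measurable g → ∀ a,
      ∫⁻ x, g (a + x) ∂KPaux.cnt lam = ∫⁻ x, g x ∂KPaux.cnt lam :=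
    fun g _ a => KPaux.cnt_addL lam g a
  have hSc : ∀ g : ℤ → ℝ≥0∞, Measurable g → ∀ a,
      ∫⁻ x, g (a - x) ∂KPaux.cnt lam = ∫⁻ x, g x ∂KPaux.cnt lam :=
    fun g _ a => KPaux.cnt_subL lam g a
  -- τ-level fiber bound
  have hτ : ∀ x y : ℝ × ℤ,
      ∫⁻ s, ∫⁻ t, g₁ (s, x) * (g₂ (t, y) * g₃ (s + t, x + y))
        ≤ (ENNReal.ofReal (min (2*K₁) (min (2*K₂) (2*K₃)))) ^ (1/2:ℝ)
            * (φ₁ x * (φ₂ y * φ₃ (x + y))) := by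
    intro x y
    have hu : Measurable fun s : ℝ => g₁ (s, x) :=
      hmg₁.comp (measurable_id.prodMk measurable_const)
    have hv : Measurable fun t : ℝ => g₂ (t, y) :=
      hmg₂.comp (measurable_id.prodMk measurable_const)
    have hw : Measurable fun r : ℝ => g₃ (r, x + y) :=
      hmg₃.comp (measurable_id.prodMk measurable_const)
    have hIcc : ∀ (K ω s : ℝ), 1 ≤ K → Real.sqrt (1 + (s - ω) ^ 2) ≤ K →
        s ∈ Set.Icc (ω - K) (ω + K) := by
      intro K ω s hK h
      have h0 : (0:ℝ) ≤ 1 + (s - ω) ^ 2 := by positivity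
      have h1 := Real.sq_sqrt h0
      have h2 := Real.sqrt_nonneg (1 + (s - ω) ^ 2)
      constructor <;> nlinarith [h1, h2, h, hK]
    have hsu : ∀ s : ℝ, g₁ (s, x) ≠ 0 →
        s ∈ Set.Icc (kpOmega x.1 ((x.2:ℝ)/lam) - K₁) (kpOmega x.1 ((x.2:ℝ)/lam) + K₁) := by
      intro s hsne
      obtain ⟨-, -, hK, -⟩ := hs₁ (s, x) (hne₁ _ hsne)
      exact hIcc K₁ _ s hK₁ hK
    have hsv : ∀ t : ℝ, g₂ (t, y) ≠ 0 →
        t ∈ Set.Icc (kpOmega y.1 ((y.2:ℝ)/lam) - K₂) (kpOmega y.1 ((y.2:ℝ)/lam) + K₂) := by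
      intro t htne
      obtain ⟨-, -, hK, -⟩ := hs₂ (t, y) (hne₂ _ htne)
      exact hIcc K₂ _ t hK₂ hK
    have hsw : ∀ r : ℝ, g₃ (r, x + y) ≠ 0 →
        r ∈ Set.Icc (kpOmega (x+y).1 (((x+y).2:ℝ)/lam) - K₃)
          (kpOmega (x+y).1 (((x+y).2:ℝ)/lam) + K₃) := by
      intro r hrne
      obtain ⟨-, -, hK, -⟩ := hs₃ (r, x + y) (hne₃ _ hrne)
      exact hIcc K₃ _ r hK₃ hK
    have key := KPaux.tri_min (μ := (volume : Measure ℝ)) hLv hSv hu hv hw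
      measurableSet_Icc measurableSet_Icc measurableSet_Icc hsu hsv hsw
    refine le_trans key (mul_le_mul' ?_ le_rfl)
    refine ENNReal.rpow_le_rpow ?_ (by norm_num)
    refine KPaux.min3_le_ofReal ?_ ?_ ?_ <;>
      · rw [Real.volume_Icc]
        exact ENNReal.ofReal_le_ofReal (le_of_eq (by ring))
  -- ξ-level fiber bound
  have hξ : ∀ n m : ℤ,
      ∫⁻ s, ∫⁻ t, φ₁ (s, n) * (φ₂ (t, m) * φ₃ (s + t, n + m))
        ≤ (ENNReal.ofReal (min (4*M₁) (min (4*M₂) (4*M₃)))) ^ (1/2:ℝ)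
            * (ψ₁ n * (ψ₂ m * ψ₃ (n + m))) := by
    intro n m
    have hu : Measurable fun ξ : ℝ => φ₁ (ξ, n) :=
      hmφ₁.comp (measurable_id.prodMk measurable_const)
    have hv : Measurable fun ξ : ℝ => φ₂ (ξ, m) :=
      hmφ₂.comp (measurable_id.prodMk measurable_const)
    have hw : Measurable fun ξ : ℝ => φ₃ (ξ, n + m) :=
      hmφ₃.comp (measurable_id.prodMk measurable_const)
    have hsu : ∀ ξ : ℝ, φ₁ (ξ, n) ≠ 0 → ξ ∈ Set.Icc (-(2*M₁)) (2*M₁) := by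
      intro ξ h
      by_contra hout
      apply h
      refine hzero g₁ f₁ hg₁def (ξ, n) ?_
      intro s
      by_contra hf
      obtain ⟨-, habs, -, -⟩ := hs₁ (s, (ξ, n)) hf
      exact hout (Set.mem_Icc.mpr (abs_le.mp habs))
    have hsv : ∀ ξ : ℝ, φ₂ (ξ, m) ≠ 0 → ξ ∈ Set.Icc (-(2*M₂)) (2*M₂) := by
      intro ξ h
      by_contra hout
      apply h
      refine hzero g₂ f₂ hg₂def (ξ, m) ?_
      intro s
      by_contra hf
      obtain ⟨-, habs, -, -⟩ := hs₂ (s, (ξ, m)) hf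
      exact hout (Set.mem_Icc.mpr (abs_le.mp habs))
    have hsw : ∀ ξ : ℝ, φ₃ (ξ, n + m) ≠ 0 → ξ ∈ Set.Icc (-(2*M₃)) (2*M₃) := by
      intro ξ h
      by_contra hout
      apply h
      refine hzero g₃ f₃ hg₃def (ξ, n + m) ?_
      intro s
      by_contra hf
      obtain ⟨-, habs, -, -⟩ := hs₃ (s, (ξ, n + m)) hf
      exact hout (Set.mem_Icc.mpr (abs_le.mp habs))
    have key := KPaux.tri_min (μ := (volume : Measure ℝ)) hLv hSv hu hv hw
      measurableSet_Icc measurableSet_Icc measurableSet_Icc hsu hsv hsw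
    refine le_trans key (mul_le_mul' ?_ le_rfl)
    refine ENNReal.rpow_le_rpow ?_ (by norm_num)
    refine KPaux.min3_le_ofReal ?_ ?_ ?_ <;>
      · rw [Real.volume_Icc]
        exact ENNReal.ofReal_le_ofReal (le_of_eq (by ring))
  -- q-level (base) bound
  have hbase : ∫⁻ n, ∫⁻ m, ψ₁ n * (ψ₂ m * ψ₃ (n + m)) ∂KPaux.cnt lam ∂KPaux.cnt lam
      ≤ (ENNReal.ofReal (min L₁ (min L₂ L₃))) ^ (1/2:ℝ)
          * (KPaux.n2 (KPaux.cnt lam) ψ₁ *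
            (KPaux.n2 (KPaux.cnt lam) ψ₂ * KPaux.n2 (KPaux.cnt lam) ψ₃)) := by
    have hsu : ∀ k : ℤ, ψ₁ k ≠ 0 → k ∈ I₁ := by
      intro k h
      by_contra hout
      apply h
      show (∫⁻ ξ : ℝ, φ₁ (ξ, k) ^ (2:ℝ)) ^ (1/2:ℝ) = 0
      have e : ∀ ξ : ℝ, φ₁ (ξ, k) ^ (2:ℝ) = 0 := by
        intro ξ
        have : φ₁ (ξ, k) = 0 := by
          refine hzero g₁ f₁ hg₁def (ξ, k) ?_
          intro s
          by_contra hf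
          obtain ⟨-, -, -, hmem⟩ := hs₁ (s, (ξ, k)) hf
          exact hout hmem
        rw [this]; exact ENNReal.zero_rpow_of_pos (by norm_num)
      rw [lintegral_congr e, lintegral_zero]
      exact ENNReal.zero_rpow_of_pos (by norm_num)
    have hsv : ∀ k : ℤ, ψ₂ k ≠ 0 → k ∈ I₂ := by
      intro k h
      by_contra hout
      apply h
      show (∫⁻ ξ : ℝ, φ₂ (ξ, k) ^ (2:ℝ)) ^ (1/2:ℝ) = 0
      have e : ∀ ξ : ℝ, φ₂ (ξ, k) ^ (2:ℝ) = 0 := by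
        intro ξ
        have : φ₂ (ξ, k) = 0 := by
          refine hzero g₂ f₂ hg₂def (ξ, k) ?_
          intro s
          by_contra hf
          obtain ⟨-, -, -, hmem⟩ := hs₂ (s, (ξ, k)) hf
          exact hout hmem
        rw [this]; exact ENNReal.zero_rpow_of_pos (by norm_num)
      rw [lintegral_congr e, lintegral_zero]
      exact ENNReal.zero_rpow_of_pos (by norm_num)
    have hsw : ∀ k : ℤ, ψ₃ k ≠ 0 → k ∈ I₃ := by
      intro k h
      by_contra hout
      apply h
      show (∫⁻ ξ : ℝ, φ₃ (ξ, k) ^ (2:ℝ)) ^ (1/2:ℝ) = 0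
      have e : ∀ ξ : ℝ, φ₃ (ξ, k) ^ (2:ℝ) = 0 := by
        intro ξ
        have : φ₃ (ξ, k) = 0 := by
          refine hzero g₃ f₃ hg₃def (ξ, k) ?_
          intro s
          by_contra hf
          obtain ⟨-, -, -, hmem⟩ := hs₃ (s, (ξ, k)) hf
          exact hout hmem
        rw [this]; exact ENNReal.zero_rpow_of_pos (by norm_num)
      rw [lintegral_congr e, lintegral_zero]
      exact ENNReal.zero_rpow_of_pos (by norm_num)
    have key := KPaux.tri_min (μ := KPaux.cnt lam) hLc hSc hmψ₁ hmψ₂ hmψ₃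
      (I₁.to_countable.measurableSet) (I₂.to_countable.measurableSet)
      (I₃.to_countable.measurableSet) hsu hsv hsw
    refine le_trans key (mul_le_mul' ?_ le_rfl)
    refine ENNReal.rpow_le_rpow ?_ (by norm_num)
    exact KPaux.min3_le_ofReal hI₁ hI₂ hI₃
  -- peeling
  have peel1 := KPaux.peel (volume : Measure ℝ) ((volume : Measure ℝ).prod (KPaux.cnt lam))
      hmg₁ hmg₂ hmg₃ hmφ₁ hmφ₂ hmφ₃ hτ
  have peel2 := KPaux.peel (volume : Measure ℝ) (KPaux.cnt lam)
      hmφ₁ hmφ₂ hmφ₃ hmψ₁ hmψ₂ hmψ₃ hξ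
  -- the main nonnegative quantity
  set X0 : ℝ≥0∞ :=
    ∫⁻ p, (∫⁻ p', g₁ (p - p') * g₂ p' ∂kpMeasure lam) * g₃ p ∂kpMeasure lam with hX0def
  -- rewrite X0 as a trilinear convolution form
  have kp_addR : ∀ F : ℝ × ℝ × ℤ → ℝ≥0∞, Measurable F → ∀ b,
      ∫⁻ p, F (p + b) ∂kpMeasure lam = ∫⁻ p, F p ∂kpMeasure lam := by
    intro F hF b
    rw [hκ]
    refine KPaux.prod_addR _ _ (fun g' _ a' => KPaux.vol_addR g' a') ?_ F hF b
    intro g' hg' a'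
    exact KPaux.prod_addR _ _ (fun g'' _ a'' => KPaux.vol_addR g'' a'')
      (fun g'' _ a'' => KPaux.cnt_addR lam g'' a'') g' hg' a'
  have hin : Measurable fun q : (ℝ×ℝ×ℤ) × (ℝ×ℝ×ℤ) => (g₁ (q.1 - q.2) * g₂ q.2) * g₃ q.1 :=
    ((hmg₁.comp (measurable_fst.sub measurable_snd)).mul (hmg₂.comp measurable_snd)).mul
      (hmg₃.comp measurable_fst)
  have hin2 : Measurable fun q : (ℝ×ℝ×ℤ) × (ℝ×ℝ×ℤ) => (g₁ q.2 * g₂ q.1) * g₃ (q.2 + q.1) :=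
    ((hmg₁.comp measurable_snd).mul (hmg₂.comp measurable_fst)).mul
      (hmg₃.comp (measurable_snd.add measurable_fst))
  have hXeq : X0 = ∫⁻ a, ∫⁻ b, g₁ a * (g₂ b * g₃ (a + b)) ∂kpMeasure lam ∂kpMeasure lam := by
    calc X0 = ∫⁻ p, ∫⁻ p', (g₁ (p - p') * g₂ p') * g₃ p ∂kpMeasure lam ∂kpMeasure lam := by
          refine lintegral_congr fun p => ?_
          exact (lintegral_mul_const (g₃ p)
            ((hmg₁.comp (measurable_const.sub measurable_id)).mul hmg₂)).symm
      _ = ∫⁻ p', ∫⁻ p, (g₁ (p - p') * g₂ p') * g₃ p ∂kpMeasure lam ∂kpMeasure lam :=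
          lintegral_lintegral_swap hin.aemeasurable
      _ = ∫⁻ p', ∫⁻ a, (g₁ a * g₂ p') * g₃ (a + p') ∂kpMeasure lam ∂kpMeasure lam := by
          refine lintegral_congr fun p' => ?_
          have hF : Measurable fun p : ℝ×ℝ×ℤ => (g₁ (p - p') * g₂ p') * g₃ p :=
            ((hmg₁.comp (measurable_id.sub measurable_const)).mul measurable_const).mul hmg₃
          rw [← kp_addR _ hF p']
          refine lintegral_congr fun a => ?_
          rw [add_sub_cancel_right]
      _ = ∫⁻ a, ∫⁻ p', (g₁ a * g₂ p') * g₃ (a + p') ∂kpMeasure lam ∂kpMeasure lam := by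
          have := lintegral_lintegral_swap (μ := kpMeasure lam) (ν := kpMeasure lam)
            (f := fun p' a => (g₁ a * g₂ p') * g₃ (a + p')) hin2.aemeasurable
          exact this
      _ = ∫⁻ a, ∫⁻ b, g₁ a * (g₂ b * g₃ (a + b)) ∂kpMeasure lam ∂kpMeasure lam := by
          refine lintegral_congr fun a => lintegral_congr fun b => by ring
  -- identify the L² masses
  have hBgen : ∀ (f : ℝ × ℝ × ℤ → ℝ) (g : ℝ × ℝ × ℤ → ℝ≥0∞) (φ : ℝ × ℤ → ℝ≥0∞) (ψ : ℤ → ℝ≥0∞),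
      Measurable f → (g = fun p => (‖f p‖₊ : ℝ≥0∞)) →
      (φ = fun x => (∫⁻ s, g (s, x) ^ (2:ℝ)) ^ (1/2:ℝ)) →
      (ψ = fun n => (∫⁻ ξ, φ (ξ, n) ^ (2:ℝ)) ^ (1/2:ℝ)) →
      Integrable (fun p => f p ^ 2) (kpMeasure lam) →
      (∫⁻ n, ψ n ^ (2:ℝ) ∂KPaux.cnt lam) = ENNReal.ofReal (∫ p, f p ^ 2 ∂kpMeasure lam) := by
    intro f g φ ψ hmf hgd hφd hψd hint
    have hg : Measurable g := by rw [hgd]; exact measurable_coe_nnreal_ennreal.comp hmf.nnnorm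
    have hφm : Measurable φ := by rw [hφd]; exact hmφ g hg
    have eψ : ∀ n : ℤ, ψ n ^ (2:ℝ) = ∫⁻ ξ, φ (ξ, n) ^ (2:ℝ) := by
      intro n
      simp only [hψd]
      rw [← ENNReal.rpow_mul, show (1/2:ℝ) * 2 = 1 by norm_num, ENNReal.rpow_one]
    have eφ : ∀ x : ℝ × ℤ, φ x ^ (2:ℝ) = ∫⁻ s, g (s, x) ^ (2:ℝ) := by
      intro x
      simp only [hφd]
      rw [← ENNReal.rpow_mul, show (1/2:ℝ) * 2 = 1 by norm_num, ENNReal.rpow_one]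
    calc ∫⁻ n, ψ n ^ (2:ℝ) ∂KPaux.cnt lam
        = ∫⁻ n, ∫⁻ ξ, φ (ξ, n) ^ (2:ℝ) ∂volume ∂KPaux.cnt lam := lintegral_congr eψ
      _ = ∫⁻ ξ, ∫⁻ n, φ (ξ, n) ^ (2:ℝ) ∂KPaux.cnt lam ∂volume := by
          refine lintegral_lintegral_swap ?_
          exact ((hφm.comp (measurable_snd.prodMk measurable_fst)).pow
            measurable_const).aemeasurable
      _ = ∫⁻ x : ℝ × ℤ, φ x ^ (2:ℝ) ∂((volume : Measure ℝ).prod (KPaux.cnt lam)) :=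
          (lintegral_prod _ ((hφm.pow measurable_const).aemeasurable)).symm
      _ = ∫⁻ x : ℝ × ℤ, ∫⁻ s, g (s, x) ^ (2:ℝ) ∂volume
            ∂((volume : Measure ℝ).prod (KPaux.cnt lam)) := lintegral_congr eφ
      _ = ∫⁻ s, ∫⁻ x : ℝ × ℤ, g (s, x) ^ (2:ℝ)
            ∂((volume : Measure ℝ).prod (KPaux.cnt lam)) ∂volume := by
          refine lintegral_lintegral_swap ?_
          exact ((hg.comp (measurable_snd.prodMk measurable_fst)).pow
            measurable_const).aemeasurable
      _ = ∫⁻ p, g p ^ (2:ℝ) ∂kpMeasure lam := by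
          rw [hκ]
          exact (lintegral_prod _ ((hg.pow measurable_const).aemeasurable)).symm
      _ = ∫⁻ p, ENNReal.ofReal (f p ^ 2) ∂kpMeasure lam := by
          refine lintegral_congr fun p => ?_
          simp only [hgd]
          rw [← enorm_eq_nnnorm, ← ofReal_norm,
            ENNReal.ofReal_rpow_of_nonneg (norm_nonneg _) (by norm_num : (0:ℝ) ≤ 2)]
          congr 1
          rw [Real.rpow_two, Real.norm_eq_abs, sq_abs]
      _ = ENNReal.ofReal (∫ p, f p ^ 2 ∂kpMeasure lam) :=
          (MeasureTheory.ofReal_integral_eq_lintegral_ofReal hint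
            (Filter.Eventually.of_forall fun p => sq_nonneg _)).symm
  have hn2₁ : KPaux.n2 (KPaux.cnt lam) ψ₁
      = (ENNReal.ofReal (∫ p, f₁ p ^ 2 ∂kpMeasure lam)) ^ (1/2:ℝ) := by
    unfold KPaux.n2
    rw [hBgen f₁ g₁ φ₁ ψ₁ hm₁ hg₁def hφ₁def hψ₁def hint₁]
  have hn2₂ : KPaux.n2 (KPaux.cnt lam) ψ₂
      = (ENNReal.ofReal (∫ p, f₂ p ^ 2 ∂kpMeasure lam)) ^ (1/2:ℝ) := by
    unfold KPaux.n2
    rw [hBgen f₂ g₂ φ₂ ψ₂ hm₂ hg₂def hφ₂def hψ₂def hint₂]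
  have hn2₃ : KPaux.n2 (KPaux.cnt lam) ψ₃
      = (ENNReal.ofReal (∫ p, f₃ p ^ 2 ∂kpMeasure lam)) ^ (1/2:ℝ) := by
    unfold KPaux.n2
    rw [hBgen f₃ g₃ φ₃ ψ₃ hm₃ hg₃def hφ₃def hψ₃def hint₃]
  -- the full chain in ℝ≥0∞
  have hchain : X0 ≤ (ENNReal.ofReal (min (2*K₁) (min (2*K₂) (2*K₃)))) ^ (1/2:ℝ) *
      ((ENNReal.ofReal (min (4*M₁) (min (4*M₂) (4*M₃)))) ^ (1/2:ℝ) *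
       ((ENNReal.ofReal (min L₁ (min L₂ L₃))) ^ (1/2:ℝ) *
        ((ENNReal.ofReal (∫ p, f₁ p ^ 2 ∂kpMeasure lam)) ^ (1/2:ℝ) *
         ((ENNReal.ofReal (∫ p, f₂ p ^ 2 ∂kpMeasure lam)) ^ (1/2:ℝ) *
          (ENNReal.ofReal (∫ p, f₃ p ^ 2 ∂kpMeasure lam)) ^ (1/2:ℝ))))) := by
    calc X0 = ∫⁻ a, ∫⁻ b, g₁ a * (g₂ b * g₃ (a + b)) ∂kpMeasure lam ∂kpMeasure lam := hXeq
      _ ≤ (ENNReal.ofReal (min (2*K₁) (min (2*K₂) (2*K₃)))) ^ (1/2:ℝ) *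
            ∫⁻ x, ∫⁻ y, φ₁ x * (φ₂ y * φ₃ (x + y))
              ∂((volume : Measure ℝ).prod (KPaux.cnt lam))
              ∂((volume : Measure ℝ).prod (KPaux.cnt lam)) := by
          rw [hκ]; exact peel1
      _ ≤ (ENNReal.ofReal (min (2*K₁) (min (2*K₂) (2*K₃)))) ^ (1/2:ℝ) *
            ((ENNReal.ofReal (min (4*M₁) (min (4*M₂) (4*M₃)))) ^ (1/2:ℝ) *
              ∫⁻ n, ∫⁻ m, ψ₁ n * (ψ₂ m * ψ₃ (n + m)) ∂KPaux.cnt lam ∂KPaux.cnt lam) :=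
          mul_le_mul_right peel2 _
      _ ≤ (ENNReal.ofReal (min (2*K₁) (min (2*K₂) (2*K₃)))) ^ (1/2:ℝ) *
            ((ENNReal.ofReal (min (4*M₁) (min (4*M₂) (4*M₃)))) ^ (1/2:ℝ) *
              ((ENNReal.ofReal (min L₁ (min L₂ L₃))) ^ (1/2:ℝ) *
                (KPaux.n2 (KPaux.cnt lam) ψ₁ *
                  (KPaux.n2 (KPaux.cnt lam) ψ₂ * KPaux.n2 (KPaux.cnt lam) ψ₃)))) :=
          mul_le_mul_right (mul_le_mul_right hbase _) _
      _ = _ := by rw [hn2₁, hn2₂, hn2₃]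
  -- from the Bochner integral to X0
  have hpt : ∀ p, ENNReal.ofReal ‖(∫ p', f₁ (p - p') * f₂ p' ∂kpMeasure lam) * f₃ p‖
      ≤ (∫⁻ p', g₁ (p - p') * g₂ p' ∂kpMeasure lam) * g₃ p := by
    intro p
    rw [norm_mul, ENNReal.ofReal_mul (norm_nonneg _)]
    refine mul_le_mul' ?_ ?_
    · calc ENNReal.ofReal ‖∫ p', f₁ (p - p') * f₂ p' ∂kpMeasure lam‖
          = (‖∫ p', f₁ (p - p') * f₂ p' ∂kpMeasure lam‖₊ : ℝ≥0∞) :=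
            ofReal_norm _
        _ ≤ ∫⁻ p', (‖f₁ (p - p') * f₂ p'‖₊ : ℝ≥0∞) ∂kpMeasure lam :=
            enorm_integral_le_lintegral_enorm _
        _ = ∫⁻ p', g₁ (p - p') * g₂ p' ∂kpMeasure lam := by
            refine lintegral_congr fun p' => ?_
            simp only [hg₁def, hg₂def]
            rw [nnnorm_mul, ENNReal.coe_mul]
    · simp only [hg₃def]
      exact le_of_eq (ofReal_norm _)
  have hfin : ((ENNReal.ofReal (min (2*K₁) (min (2*K₂) (2*K₃)))) ^ (1/2:ℝ) *
      ((ENNReal.ofReal (min (4*M₁) (min (4*M₂) (4*M₃)))) ^ (1/2:ℝ) *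
       ((ENNReal.ofReal (min L₁ (min L₂ L₃))) ^ (1/2:ℝ) *
        ((ENNReal.ofReal (∫ p, f₁ p ^ 2 ∂kpMeasure lam)) ^ (1/2:ℝ) *
         ((ENNReal.ofReal (∫ p, f₂ p ^ 2 ∂kpMeasure lam)) ^ (1/2:ℝ) *
          (ENNReal.ofReal (∫ p, f₃ p ^ 2 ∂kpMeasure lam)) ^ (1/2:ℝ)))))) ≠ ⊤ := by
    have h1 : ∀ r : ℝ, (ENNReal.ofReal r) ^ (1/2:ℝ) ≠ ⊤ := fun r =>
      ENNReal.rpow_ne_top_of_nonneg (by norm_num) ENNReal.ofReal_ne_top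
    exact ENNReal.mul_ne_top (h1 _) (ENNReal.mul_ne_top (h1 _) (ENNReal.mul_ne_top (h1 _)
      (ENNReal.mul_ne_top (h1 _) (ENNReal.mul_ne_top (h1 _) (h1 _)))))
  -- real-number bookkeeping
  have hNn₁ : 0 ≤ ∫ p, f₁ p ^ 2 ∂kpMeasure lam := integral_nonneg fun p => sq_nonneg _
  have hNn₂ : 0 ≤ ∫ p, f₂ p ^ 2 ∂kpMeasure lam := integral_nonneg fun p => sq_nonneg _
  have hNn₃ : 0 ≤ ∫ p, f₃ p ^ 2 ∂kpMeasure lam := integral_nonneg fun p => sq_nonneg _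
  have hKm : (0:ℝ) ≤ min (2*K₁) (min (2*K₂) (2*K₃)) :=
    le_min (by linarith) (le_min (by linarith) (by linarith))
  have hMm : (0:ℝ) ≤ min (4*M₁) (min (4*M₂) (4*M₃)) :=
    le_min (by linarith) (le_min (by linarith) (by linarith))
  have hLm : (0:ℝ) ≤ min L₁ (min L₂ L₃) :=
    le_min hL₁ (le_min hL₂ hL₃)
  have hminK : (2:ℝ) * min K₁ (min K₂ K₃) = min (2*K₁) (min (2*K₂) (2*K₃)) := by
    rw [mul_min_of_nonneg _ _ (by norm_num : (0:ℝ) ≤ 2),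
      mul_min_of_nonneg _ _ (by norm_num : (0:ℝ) ≤ 2)]
  have hminM : (4:ℝ) * min M₁ (min M₂ M₃) = min (4*M₁) (min (4*M₂) (4*M₃)) := by
    rw [mul_min_of_nonneg _ _ (by norm_num : (0:ℝ) ≤ 4),
      mul_min_of_nonneg _ _ (by norm_num : (0:ℝ) ≤ 4)]
  have hsqrt4 : Real.sqrt 4 = 2 := by
    rw [show (4:ℝ) = 2^2 by norm_num]
    exact Real.sqrt_sq (by norm_num)
  calc |∫ p, (∫ p', f₁ (p - p') * f₂ p' ∂kpMeasure lam) * f₃ p ∂kpMeasure lam|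
      ≤ (∫⁻ p, ENNReal.ofReal ‖(∫ p', f₁ (p - p') * f₂ p' ∂kpMeasure lam) * f₃ p‖
          ∂kpMeasure lam).toReal := by
        rw [← Real.norm_eq_abs]
        exact norm_integral_le_lintegral_norm _
    _ ≤ ((ENNReal.ofReal (min (2*K₁) (min (2*K₂) (2*K₃)))) ^ (1/2:ℝ) *
          ((ENNReal.ofReal (min (4*M₁) (min (4*M₂) (4*M₃)))) ^ (1/2:ℝ) *
           ((ENNReal.ofReal (min L₁ (min L₂ L₃))) ^ (1/2:ℝ) *
            ((ENNReal.ofReal (∫ p, f₁ p ^ 2 ∂kpMeasure lam)) ^ (1/2:ℝ) *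
             ((ENNReal.ofReal (∫ p, f₂ p ^ 2 ∂kpMeasure lam)) ^ (1/2:ℝ) *
              (ENNReal.ofReal (∫ p, f₃ p ^ 2 ∂kpMeasure lam)) ^ (1/2:ℝ)))))).toReal := by
        refine ENNReal.toReal_mono hfin ?_
        exact le_trans (lintegral_mono hpt) hchain
    _ = Real.sqrt (min (2*K₁) (min (2*K₂) (2*K₃))) *
          (Real.sqrt (min (4*M₁) (min (4*M₂) (4*M₃))) *
           (Real.sqrt (min L₁ (min L₂ L₃)) *
            (Real.sqrt (∫ p, f₁ p ^ 2 ∂kpMeasure lam) *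
             (Real.sqrt (∫ p, f₂ p ^ 2 ∂kpMeasure lam) *
              Real.sqrt (∫ p, f₃ p ^ 2 ∂kpMeasure lam))))) := by
        rw [ENNReal.toReal_mul, ENNReal.toReal_mul, ENNReal.toReal_mul, ENNReal.toReal_mul,
          ENNReal.toReal_mul]
        rw [← ENNReal.toReal_rpow, ← ENNReal.toReal_rpow, ← ENNReal.toReal_rpow,
          ← ENNReal.toReal_rpow, ← ENNReal.toReal_rpow, ← ENNReal.toReal_rpow]
        rw [ENNReal.toReal_ofReal hKm, ENNReal.toReal_ofReal hMm, ENNReal.toReal_ofReal hLm,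
          ENNReal.toReal_ofReal hNn₁, ENNReal.toReal_ofReal hNn₂, ENNReal.toReal_ofReal hNn₃]
        rw [← Real.sqrt_eq_rpow, ← Real.sqrt_eq_rpow, ← Real.sqrt_eq_rpow, ← Real.sqrt_eq_rpow,
          ← Real.sqrt_eq_rpow, ← Real.sqrt_eq_rpow]
    _ = (Real.sqrt 2 * 2) * (Real.sqrt (min M₁ (min M₂ M₃)) * (Real.sqrt (min K₁ (min K₂ K₃)) *
          (Real.sqrt (min L₁ (min L₂ L₃)) *
            (Real.sqrt (∫ p, f₁ p ^ 2 ∂kpMeasure lam) *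
             (Real.sqrt (∫ p, f₂ p ^ 2 ∂kpMeasure lam) *
              Real.sqrt (∫ p, f₃ p ^ 2 ∂kpMeasure lam)))))) := by
        rw [← hminK, ← hminM, Real.sqrt_mul (by norm_num : (0:ℝ) ≤ 2),
          Real.sqrt_mul (by norm_num : (0:ℝ) ≤ 4), hsqrt4]
        ring
    _ ≤ 3 * (Real.sqrt (min M₁ (min M₂ M₃)) * (Real.sqrt (min K₁ (min K₂ K₃)) *
          (Real.sqrt (min L₁ (min L₂ L₃)) *
            (Real.sqrt (∫ p, f₁ p ^ 2 ∂kpMeasure lam) *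
             (Real.sqrt (∫ p, f₂ p ^ 2 ∂kpMeasure lam) *
              Real.sqrt (∫ p, f₃ p ^ 2 ∂kpMeasure lam)))))) := by
        refine mul_le_mul_of_nonneg_right ?_ (by positivity)
        nlinarith [Real.sq_sqrt (by norm_num : (0:ℝ) ≤ 2), Real.sqrt_nonneg 2,
          sq_nonneg (Real.sqrt 2 * 2 - 3)]
    _ = 3 * Real.sqrt (min M₁ (min M₂ M₃)) * Real.sqrt (min K₁ (min K₂ K₃))
          * Real.sqrt (min L₁ (min L₂ L₃))
          * Real.sqrt (∫ p, f₁ p ^ 2 ∂kpMeasure lam)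
          * Real.sqrt (∫ p, f₂ p ^ 2 ∂kpMeasure lam)
          * Real.sqrt (∫ p, f₃ p ^ 2 ∂kpMeasure lam) := by ring
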